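/- Let ρ > 0, let S ⊂ ℝ^k be a compact convex set of diameter at least ρ, let m ≥ 1 be an integer, and let φ : S → [0,∞) be such that φ^{1/m} is concave on S, with μ = φ·vol_k a probability measure on S (vol_k being k-dimensional Lebesgue measure). Then for every x ∈ ℝ^k, every r > 0 and every positive integer N with N ≤ ρ/(4r), μ(B(x,r) ∩ S) ≤ 2^{k+m}/N. In particular there is a constant C depending only on k and m such that μ(B(x,r) ∩ S) ≤ C·r/ρ whenever 0 < r ≤ ρ/8. -/

import Mathlib

open Set MeasureTheory Metric
open scoped ENNReal

set_option maxHeartbeats 1000000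

/-- Small balls have small measure, uniformly over probability measures with
`m`-concave density supported on a compact convex set `S ⊆ ℝ^k` of diameter at least
`ρ`: for every `x`, `r > 0` and positive integer `N ≤ ρ/(4r)`,
`μ(B(x,r) ∩ S) ≤ 2^{k+m}/N`; in particular there is a constant `C = C(k,m) > 0` such
that `μ(B(x,r) ∩ S) ≤ C·r/ρ` whenever `0 < r ≤ ρ/8`. -/
theorem small_ball_measure_bound
    (k m : ℕ) (hm : 1 ≤ m) :
    ∃ C : ℝ, 0 < C ∧
      ∀ (ρ : ℝ), 0 < ρ →
      ∀ S : Set (EuclideanSpace ℝ (Fin k)),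
        IsCompact S → Convex ℝ S → ρ ≤ Metric.diam S →
      ∀ φ : EuclideanSpace ℝ (Fin k) → ℝ,
        (∀ u ∈ S, 0 ≤ φ u) →
        ConcaveOn ℝ S (fun u => φ u ^ ((1 : ℝ) / m)) →
        (∫⁻ u in S, ENNReal.ofReal (φ u)) = 1 →
        (∀ (x : EuclideanSpace ℝ (Fin k)) (r : ℝ) (N : ℕ), 0 < r → 0 < N →
            (N : ℝ) ≤ ρ / (4 * r) →
            ∫⁻ u in closedBall x r ∩ S, ENNReal.ofReal (φ u) ≤
              ENNReal.ofReal (2 ^ (k + m) / N)) ∧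
        (∀ (x : EuclideanSpace ℝ (Fin k)) (r : ℝ), 0 < r → r ≤ ρ / 8 →
            ∫⁻ u in closedBall x r ∩ S, ENNReal.ofReal (φ u) ≤
              ENNReal.ofReal (C * r / ρ)) := by
  refine ⟨8 * 2 ^ (k + m), by positivity, ?_⟩
  intro ρ hρ S hScomp hSconv hdiam φ hφ0 hconc hint
  have key : ∀ (x : EuclideanSpace ℝ (Fin k)) (r : ℝ) (N : ℕ), 0 < r → 0 < N →
      (N : ℝ) ≤ ρ / (4 * r) →
      ∫⁻ u in closedBall x r ∩ S, ENNReal.ofReal (φ u) ≤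
        ENNReal.ofReal (2 ^ (k + m) / N) := by
    intro x r N hr hN hNle
    have hSmeas : MeasurableSet S := hScomp.measurableSet
    have hBmeas : MeasurableSet (closedBall x r ∩ S) :=
      measurableSet_closedBall.inter hSmeas
    have hBsub : closedBall x r ∩ S ⊆ S := inter_subset_right
    set I := ∫⁻ u in closedBall x r ∩ S, ENNReal.ofReal (φ u) with hIdef
    have hIle1 : I ≤ 1 := by rw [← hint]; exact lintegral_mono_set hBsub
    rcases Nat.lt_or_ge N 2 with hN1 | hN2
    · have hN1' : N = 1 := by omega
      subst hN1'
      refine hIle1.trans ?_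
      rw [← ENNReal.ofReal_one]
      apply ENNReal.ofReal_le_ofReal
      have : (1:ℝ) ≤ 2 ^ (k + m) := one_le_pow₀ one_le_two
      simpa using this
    · have hr4 : (0:ℝ) < 4 * r := by linarith
      have hρN : 4 * r * N ≤ ρ := by
        rw [le_div_iff₀ hr4] at hNle; linarith
      obtain ⟨a, ha, b, hb, hab⟩ : ∃ a ∈ S, ∃ b ∈ S, ρ/2 < dist a b := by
        by_contra h
        push_neg at h
        have hd2 : Metric.diam S ≤ ρ/2 := Metric.diam_le_of_forall_dist_le (by linarith) h
        linarith
      have hNR : (2:ℝ) ≤ N := by exact_mod_cast hN2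
      have hN1R : (0:ℝ) < (N:ℝ) - 1 := by linarith
      set y : ℕ → EuclideanSpace ℝ (Fin k) :=
        fun i => a + (((i:ℝ))/((N:ℝ)-1)) • (b - a) with hy
      have hymem : ∀ i < N, y i ∈ S := by
        intro i hi
        have hiN : (i:ℝ) + 1 ≤ N := by exact_mod_cast hi
        have ht0 : (0:ℝ) ≤ (i:ℝ)/((N:ℝ)-1) := by positivity
        have ht1 : (i:ℝ)/((N:ℝ)-1) ≤ 1 := by
          rw [div_le_one hN1R]; linarith
        have hrepr : y i = (1 - (i:ℝ)/((N:ℝ)-1)) • a + ((i:ℝ)/((N:ℝ)-1)) • b := by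
          simp only [hy]; module
        rw [hrepr]
        exact hSconv ha hb (by linarith) ht0 (by ring)
      have hydist : ∀ i < N, ∀ j < N, i ≠ j → 2 * r < dist (y i) (y j) := by
        intro i hi j hj hij
        have h1 : dist (y i) (y j) = |((i:ℝ) - j)/((N:ℝ)-1)| * ‖b - a‖ := by
          rw [dist_eq_norm]
          have : y i - y j = (((i:ℝ) - j)/((N:ℝ)-1)) • (b - a) := by
            simp only [hy]; rw [sub_div, sub_smul]; abel
          rw [this, norm_smul, Real.norm_eq_abs]
        have habs : (1:ℝ) ≤ |(i:ℝ) - j| := by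
          rcases hij.lt_or_gt with h | h
          · have : (i:ℝ) + 1 ≤ j := by exact_mod_cast h
            rw [abs_sub_comm, abs_of_nonneg (by linarith)]; linarith
          · have : (j:ℝ) + 1 ≤ i := by exact_mod_cast h
            rw [abs_of_nonneg (by linarith)]; linarith
        have h3 : ρ/2 < ‖b - a‖ := by
          rwa [dist_eq_norm, norm_sub_rev] at hab
        have h5 : ‖b - a‖/((N:ℝ)-1) ≤ dist (y i) (y j) := by
          rw [h1, abs_div, abs_of_pos hN1R, div_mul_eq_mul_div]
          gcongr
          nlinarith [norm_nonneg (b - a)]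
        have h6 : 2 * r < ‖b - a‖/((N:ℝ)-1) := by
          rw [lt_div_iff₀ hN1R]
          nlinarith
        linarith
      set T : ℕ → Set (EuclideanSpace ℝ (Fin k)) :=
        fun i => (fun v => (2⁻¹:ℝ) • v + (2⁻¹:ℝ) • y i) '' (closedBall x r ∩ S) with hT
      have hTmeas : ∀ i, MeasurableSet (T i) := by
        intro i
        have hBc : IsCompact (closedBall x r ∩ S) := hScomp.inter_left Metric.isClosed_closedBall
        exact (hBc.image ((continuous_id.const_smul (2⁻¹:ℝ)).add continuous_const)).measurableSet
      have hTsub : ∀ i < N, T i ⊆ S := by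
        rintro i hi u ⟨v, hv, rfl⟩
        exact hSconv hv.2 (hymem i hi) (by norm_num) (by norm_num) (by norm_num)
      have hTball : ∀ i, T i ⊆ closedBall ((2⁻¹:ℝ) • x + (2⁻¹:ℝ) • y i) (r/2) := by
        rintro i u ⟨v, hv, rfl⟩
        rw [mem_closedBall, dist_eq_norm]
        have he : (2⁻¹:ℝ) • v + (2⁻¹:ℝ) • y i - ((2⁻¹:ℝ) • x + (2⁻¹:ℝ) • y i)
            = (2⁻¹:ℝ) • (v - x) := by module
        rw [he, norm_smul, Real.norm_eq_abs, abs_of_pos (by norm_num : (0:ℝ) < 2⁻¹)]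
        have : ‖v - x‖ ≤ r := by
          rw [← dist_eq_norm]; exact mem_closedBall.1 hv.1
        linarith
      have hTdisj : (↑(Finset.range N) : Set ℕ).PairwiseDisjoint T := by
        intro i hi j hj hij
        simp only [Finset.coe_range, mem_Iio] at hi hj
        rw [Function.onFun, Set.disjoint_left]
        intro u hui huj
        have h1 := hTball i hui
        have h2 := hTball j huj
        have hcc : dist ((2⁻¹:ℝ) • x + (2⁻¹:ℝ) • y i) ((2⁻¹:ℝ) • x + (2⁻¹:ℝ) • y j) ≤ r := by
          calc dist ((2⁻¹:ℝ) • x + (2⁻¹:ℝ) • y i) ((2⁻¹:ℝ) • x + (2⁻¹:ℝ) • y j)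
              ≤ dist ((2⁻¹:ℝ) • x + (2⁻¹:ℝ) • y i) u
                + dist u ((2⁻¹:ℝ) • x + (2⁻¹:ℝ) • y j) := dist_triangle _ _ _
            _ ≤ r/2 + r/2 := by
                gcongr
                · rw [dist_comm]; exact mem_closedBall.1 h1
                · exact mem_closedBall.1 h2
            _ = r := by ring
        have hccd : dist ((2⁻¹:ℝ) • x + (2⁻¹:ℝ) • y i) ((2⁻¹:ℝ) • x + (2⁻¹:ℝ) • y j)
            = 2⁻¹ * dist (y i) (y j) := by
          rw [dist_eq_norm, dist_eq_norm]
          have he : (2⁻¹:ℝ) • x + (2⁻¹:ℝ) • y i - ((2⁻¹:ℝ) • x + (2⁻¹:ℝ) • y j)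
              = (2⁻¹:ℝ) • (y i - y j) := by module
          rw [he, norm_smul, Real.norm_eq_abs, abs_of_pos (by norm_num : (0:ℝ) < 2⁻¹)]
        have := hydist i hi j hj hij
        rw [hccd] at hcc
        linarith
      have hdet : (((2⁻¹:ℝ) • (1 : EuclideanSpace ℝ (Fin k) →L[ℝ] EuclideanSpace ℝ (Fin k)))).det
          = (2⁻¹:ℝ)^k := by
        rw [ContinuousLinearMap.det]
        push_cast
        rw [LinearMap.det_smul]
        rw [show (1 : EuclideanSpace ℝ (Fin k) →ₗ[ℝ] EuclideanSpace ℝ (Fin k)) = LinearMap.id from rfl,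
          LinearMap.det_id, finrank_euclideanSpace_fin, mul_one]
      have hTlb : ∀ i < N,
          ENNReal.ofReal ((2:ℝ)⁻¹ ^ (k + m)) * I ≤ ∫⁻ u in T i, ENNReal.ofReal (φ u) := by
        intro i hi
        have hderiv : ∀ v ∈ closedBall x r ∩ S,
            HasFDerivWithinAt (fun v => (2⁻¹:ℝ) • v + (2⁻¹:ℝ) • y i)
              ((2⁻¹:ℝ) • (1 : EuclideanSpace ℝ (Fin k) →L[ℝ] EuclideanSpace ℝ (Fin k)))
              (closedBall x r ∩ S) v := by
          intro v _
          have : HasFDerivAt (fun v : EuclideanSpace ℝ (Fin k) => (2⁻¹:ℝ) • v + (2⁻¹:ℝ) • y i)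
              ((2⁻¹:ℝ) • (1 : EuclideanSpace ℝ (Fin k) →L[ℝ] EuclideanSpace ℝ (Fin k))) v := by
            simpa [ContinuousLinearMap.one_def] using ((hasFDerivAt_id v).const_smul (2⁻¹:ℝ)).add_const ((2⁻¹:ℝ) • y i)
          exact this.hasFDerivWithinAt
        have hinj : Set.InjOn (fun v => (2⁻¹:ℝ) • v + (2⁻¹:ℝ) • y i) (closedBall x r ∩ S) := by
          intro v1 _ v2 _ hv
          simp only at hv
          have := add_right_cancel hv
          exact smul_right_injective _ (by norm_num : (2⁻¹:ℝ) ≠ 0) this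
        have hchg := lintegral_image_eq_lintegral_abs_det_fderiv_mul volume hBmeas hderiv hinj
          (fun u => ENNReal.ofReal (φ u))
        calc ENNReal.ofReal ((2:ℝ)⁻¹ ^ (k + m)) * I
            = ∫⁻ v in closedBall x r ∩ S,
                ENNReal.ofReal ((2:ℝ)⁻¹ ^ (k + m)) * ENNReal.ofReal (φ v) :=
              (lintegral_const_mul' _ _ ENNReal.ofReal_ne_top).symm
          _ ≤ ∫⁻ v in closedBall x r ∩ S,
                ENNReal.ofReal |(((2⁻¹:ℝ) • (1 : EuclideanSpace ℝ (Fin k) →L[ℝ]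
                  EuclideanSpace ℝ (Fin k)))).det|
                  * ENNReal.ofReal (φ ((2⁻¹:ℝ) • v + (2⁻¹:ℝ) • y i)) := by
              apply setLIntegral_mono' hBmeas
              intro v hv
              rw [hdet, ← ENNReal.ofReal_mul (by positivity), ← ENNReal.ofReal_mul (by positivity)]
              apply ENNReal.ofReal_le_ofReal
              -- real inequality
              have hv' : v ∈ S := hv.2
              have hmid : (2⁻¹:ℝ) • v + (2⁻¹:ℝ) • y i ∈ S :=
                hSconv hv' (hymem i hi) (by norm_num) (by norm_num) (by norm_num)
              have hc := hconc.2 hv' (hymem i hi)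
                (by norm_num : (0:ℝ) ≤ 2⁻¹) (by norm_num : (0:ℝ) ≤ 2⁻¹) (by norm_num)
              simp only [smul_eq_mul] at hc
              have h0 : (0:ℝ) ≤ φ (y i) ^ ((1:ℝ)/m) :=
                Real.rpow_nonneg (hφ0 _ (hymem i hi)) _
              have h1 : 2⁻¹ * φ v ^ ((1:ℝ)/m)
                  ≤ φ ((2⁻¹:ℝ) • v + (2⁻¹:ℝ) • y i) ^ ((1:ℝ)/m) := by linarith
              have h2 := pow_le_pow_left₀ (mul_nonneg (by norm_num) (Real.rpow_nonneg (hφ0 v hv') _)) h1 m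
              have e1 : ∀ t : ℝ, 0 ≤ t → (t ^ ((1:ℝ)/m)) ^ m = t := by
                intro t ht
                rw [← Real.rpow_natCast (t ^ ((1:ℝ)/m)) m, ← Real.rpow_mul ht, one_div,
                  inv_mul_cancel₀ (by exact_mod_cast (by omega : m ≠ 0) : (m:ℝ) ≠ 0),
                  Real.rpow_one]
              rw [mul_pow, e1 _ (hφ0 v hv'), e1 _ (hφ0 _ hmid)] at h2
              -- h2 : 2⁻¹ ^ m * φ v ≤ φ mid
              rw [abs_of_pos (by positivity : (0:ℝ) < (2⁻¹:ℝ)^k), pow_add]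
              have hk : (0:ℝ) ≤ (2:ℝ)⁻¹ ^ k := by positivity
              nlinarith
          _ = ∫⁻ u in T i, ENNReal.ofReal (φ u) := by rw [hT]; rw [hchg]
      have hsum := lintegral_biUnion_finset (μ := volume) hTdisj
        (fun i _ => hTmeas i) (fun u => ENNReal.ofReal (φ u))
      have hUsub : (⋃ i ∈ Finset.range N, T i) ⊆ S :=
        iUnion₂_subset fun i hi => hTsub i (Finset.mem_range.1 hi)
      have h6 : ∑ i ∈ Finset.range N, ∫⁻ u in T i, ENNReal.ofReal (φ u) ≤ 1 := by
        rw [← hsum, ← hint]; exact lintegral_mono_set hUsub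
      have h7 : (N:ℝ≥0∞) * (ENNReal.ofReal ((2:ℝ)⁻¹ ^ (k + m)) * I) ≤ 1 := by
        calc (N:ℝ≥0∞) * (ENNReal.ofReal ((2:ℝ)⁻¹ ^ (k + m)) * I)
            = ∑ _i ∈ Finset.range N, ENNReal.ofReal ((2:ℝ)⁻¹ ^ (k + m)) * I := by
              rw [Finset.sum_const, Finset.card_range, nsmul_eq_mul]
          _ ≤ ∑ i ∈ Finset.range N, ∫⁻ u in T i, ENNReal.ofReal (φ u) :=
              Finset.sum_le_sum fun i hi => hTlb i (Finset.mem_range.1 hi)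
          _ ≤ 1 := h6
      have hNpos : (0:ℝ) < (N:ℝ) := by positivity
      have hc0 : ENNReal.ofReal ((N:ℝ) / 2 ^ (k + m)) ≠ 0 := by
        rw [Ne, ENNReal.ofReal_eq_zero, not_le]
        positivity
      have heq : ENNReal.ofReal ((N:ℝ) / 2 ^ (k + m)) * I
          = (N:ℝ≥0∞) * (ENNReal.ofReal ((2:ℝ)⁻¹ ^ (k + m)) * I) := by
        rw [← mul_assoc, ← ENNReal.ofReal_natCast N,
          ← ENNReal.ofReal_mul (by positivity : (0:ℝ) ≤ (N:ℝ))]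
        congr 2
        rw [inv_pow, div_eq_mul_inv]
      calc I = (ENNReal.ofReal ((N:ℝ) / 2 ^ (k + m)))⁻¹
              * (ENNReal.ofReal ((N:ℝ) / 2 ^ (k + m)) * I) := by
            rw [← mul_assoc, ENNReal.inv_mul_cancel hc0 ENNReal.ofReal_ne_top, one_mul]
        _ ≤ (ENNReal.ofReal ((N:ℝ) / 2 ^ (k + m)))⁻¹ * 1 := by
            gcongr
            rw [heq]; exact h7
        _ = ENNReal.ofReal (2 ^ (k + m) / (N:ℝ)) := by
            rw [mul_one, ← ENNReal.ofReal_inv_of_pos (by positivity), inv_div]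
  refine ⟨key, ?_⟩
  intro x r hr hr8
  set N := ⌊ρ/(4*r)⌋₊ with hNdef
  have h4r : (0:ℝ) < 4*r := by linarith
  have hz2 : (2:ℝ) ≤ ρ/(4*r) := by rw [le_div_iff₀ h4r]; linarith
  have hN2 : 2 ≤ N := Nat.le_floor (by exact_mod_cast hz2)
  have hNle : (N:ℝ) ≤ ρ/(4*r) := Nat.floor_le (by positivity)
  have hNgt : ρ/(4*r) - 1 < (N:ℝ) := by
    have := Nat.lt_floor_add_one (ρ/(4*r)); linarith
  have hhalf : ρ/(4*r) = 2 * (ρ/(8*r)) := by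
    field_simp; ring
  have h8 : (1:ℝ) ≤ ρ/(8*r) := by
    rw [le_div_iff₀ (by linarith)]; linarith
  have hNlb : ρ/(8*r) ≤ (N:ℝ) := by
    rw [hhalf] at hNgt; linarith
  refine (key x r N hr (by omega) hNle).trans (ENNReal.ofReal_le_ofReal ?_)
  have hN0 : (0:ℝ) < (N:ℝ) := by
    have : 0 < N := by omega
    exact_mod_cast this
  have hρ8rN : ρ ≤ 8*r*(N:ℝ) := by
    rw [div_le_iff₀ (by linarith)] at hNlb; linarith
  rw [div_le_div_iff₀ hN0 hρ]
  nlinarith [pow_pos (by norm_num : (0:ℝ) < 2) (k+m)]
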